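/- Let G be a balanced bipartite graph on parts of size n. Then the ratio of the number of derangements on G to the number of permutations on G is at most (Σ_{k=0}^{n} 1/(k!)^2)^{-1}, with equality if and only if G is the complete bipartite graph K_{n,n}. -/

import Mathlib

open Finset
namespace Stmt13Aux
variable {n : ℕ}

open Classical in
noncomputable def Mch (R : Fin n → Fin n → Prop) (S T : Finset (Fin n)) :
    Finset (Fin n → Fin n) :=
  Finset.univ.filter (fun f =>
    (∀ i ∈ S, f i ∈ T ∧ R i (f i)) ∧ (∀ i, i ∉ S → f i = i) ∧
      ∀ i ∈ S, ∀ j ∈ S, f i = f j → i = j)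

lemma mem_Mch {R : Fin n → Fin n → Prop} {S T : Finset (Fin n)} {f : Fin n → Fin n} :
    f ∈ Mch R S T ↔
      (∀ i ∈ S, f i ∈ T ∧ R i (f i)) ∧ (∀ i, i ∉ S → f i = i) ∧
        ∀ i ∈ S, ∀ j ∈ S, f i = f j → i = j := by
  classical
  simp [Mch]

variable {R : Fin n → Fin n → Prop} {S T : Finset (Fin n)}

open Classical in
noncomputable def toEmb (R : Fin n → Fin n → Prop) (S T : Finset (Fin n))
    [Nonempty (↥S ↪ ↥T)] (f : Fin n → Fin n) : (↥S ↪ ↥T) :=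
  if hf : f ∈ Mch R S T then
    ⟨fun x => ⟨f x, ((mem_Mch.1 hf).1 x x.2).1⟩,
     fun x y hxy =>
       Subtype.ext ((mem_Mch.1 hf).2.2 x x.2 y y.2 (congrArg Subtype.val hxy))⟩
  else Classical.arbitrary _

lemma nonempty_emb (h : S.card = T.card) : Nonempty (↥S ↪ ↥T) :=
  ⟨(Fintype.equivOfCardEq (by simp [h])).toEmbedding⟩

lemma toEmb_injOn (h : S.card = T.card) :
    haveI := nonempty_emb h
    Set.InjOn (toEmb R S T) (Mch R S T) := by
  haveI := nonempty_emb h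
  intro f hf g hg hfg
  simp only [Finset.mem_coe] at hf hg
  funext i
  by_cases hi : i ∈ S
  · have := congrArg (fun e : ↥S ↪ ↥T => (e ⟨i, hi⟩ : Fin n)) hfg
    simp only [toEmb, dif_pos hf, dif_pos hg] at this; exact this
  · rw [(mem_Mch.1 hf).2.1 i hi, (mem_Mch.1 hg).2.1 i hi]

lemma card_emb (h : S.card = T.card) : Fintype.card (↥S ↪ ↥T) = Nat.factorial S.card := by
  rw [Fintype.card_embedding_eq, Fintype.card_coe, Fintype.card_coe, ← h,
    Nat.descFactorial_self]

lemma Mch_card_le (h : S.card = T.card) : (Mch R S T).card ≤ Nat.factorial S.card := by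
  haveI := nonempty_emb h
  have := Finset.card_le_card_of_injOn (toEmb R S T)
    (fun f _ => Finset.mem_univ _) (toEmb_injOn h)
  simpa [card_emb h] using this

lemma Mch_card_of_total (htot : ∀ i j, R i j) (h : S.card = T.card) :
    (Mch R S T).card = Nat.factorial S.card := by
  classical
  haveI := nonempty_emb h
  rw [← card_emb h, ← Finset.card_univ]
  apply Finset.card_nbij' (toEmb R S T)
    (fun e x => if hx : x ∈ S then (e ⟨x, hx⟩ : Fin n) else x)
  · intro f _; exact Finset.mem_univ _
  · intro e _
    refine mem_Mch.2 ⟨fun i hi => ?_, fun i hi => by simp [hi], fun i hi j hj hij => ?_⟩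
    · simp only [hi, dif_pos]
      exact ⟨(e ⟨i, hi⟩).2, htot _ _⟩
    · simp only [hi, hj, dif_pos] at hij
      exact congrArg Subtype.val (e.injective (Subtype.ext hij))
  · intro f hf
    simp only [Finset.mem_coe] at hf
    funext i
    by_cases hi : i ∈ S
    · simp [toEmb, hf, hi]; rfl
    · simp [hi, (mem_Mch.1 hf).2.1 i hi]
  · intro e _
    ext x
    have hx : (fun x => if hx : x ∈ S then (e ⟨x, hx⟩ : Fin n) else x) ∈ Mch R S T := by
      refine mem_Mch.2 ⟨fun i hi => ?_, fun i hi => by simp [hi], fun i hi j hj hij => ?_⟩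
      · simp only [hi, dif_pos]
        exact ⟨(e ⟨i, hi⟩).2, htot _ _⟩
      · simp only [hi, hj, dif_pos] at hij
        exact congrArg Subtype.val (e.injective (Subtype.ext hij))
    simp [toEmb, hx, x.2]

lemma Mch_empty : Mch R ∅ ∅ = {fun i : Fin n => i} := by
  ext f
  simp only [mem_Mch, Finset.notMem_empty, Finset.mem_singleton]
  constructor
  · rintro ⟨-, h2, -⟩
    funext i; exact h2 i (by simp)
  · rintro rfl
    exact ⟨by simp, fun i _ => rfl, by simp⟩


variable {k : ℕ}

lemma fiber_card (hS : S ∈ powersetCard k (univ : Finset (Fin n)))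
    (hT : T ∈ powersetCard k (univ : Finset (Fin n))) :
    ((Mch R univ univ).filter (fun F => S.image F = T)).card
      = (Mch R S T).card * (Mch R Sᶜ Tᶜ).card := by
  classical
  have hSk : S.card = k := (mem_powersetCard.1 hS).2
  have hTk : T.card = k := (mem_powersetCard.1 hT).2
  rw [← Finset.card_product]
  apply Finset.card_nbij'
    (fun F => (fun x => if x ∈ S then F x else x, fun x => if x ∈ S then x else F x))
    (fun p x => if x ∈ S then p.1 x else p.2 x)
  · intro F hF
    simp only [Finset.mem_coe, Finset.mem_filter] at hF
    obtain ⟨hF, himg⟩ := hF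
    obtain ⟨h1, -, h3⟩ := mem_Mch.1 hF
    have hinj : ∀ i j, F i = F j → i = j := fun i j => h3 i (by simp) j (by simp)
    refine Finset.mem_product.2 ⟨mem_Mch.2 ⟨?_, ?_, ?_⟩, mem_Mch.2 ⟨?_, ?_, ?_⟩⟩
    · intro i hi
      simp only [hi, if_pos]
      exact ⟨himg ▸ Finset.mem_image_of_mem F hi, (h1 i (by simp)).2⟩
    · intro i hi; simp [hi]
    · intro i hi j hj hij
      simp only [hi, hj, if_pos] at hij
      exact hinj _ _ hij
    · intro i hi
      rw [Finset.mem_compl] at hi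
      simp only [hi, if_neg, if_false]
      refine ⟨Finset.mem_compl.2 fun hmem => ?_, (h1 i (by simp)).2⟩
      rw [← himg] at hmem
      obtain ⟨x, hx, hfx⟩ := Finset.mem_image.1 hmem
      exact hi (hinj _ _ hfx ▸ hx)
    · intro i hi
      rw [Finset.mem_compl, not_not] at hi
      simp [hi]
    · intro i hi j hj hij
      rw [Finset.mem_compl] at hi hj
      simp only [hi, hj, if_neg, if_false] at hij
      exact hinj _ _ hij
  · rintro ⟨f₁, f₂⟩ hp
    obtain ⟨hp1, hp2⟩ := Finset.mem_product.1 hp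
    obtain ⟨h11, h12, h13⟩ := mem_Mch.1 hp1
    obtain ⟨h21, h22, h23⟩ := mem_Mch.1 hp2
    dsimp only at h11 h12 h13 h21 h22 h23
    simp only [Finset.mem_coe, Finset.mem_filter]
    have hinj : ∀ i j : Fin n, (if i ∈ S then f₁ i else f₂ i) = (if j ∈ S then f₁ j else f₂ j)
        → i = j := by
      intro i j hij
      by_cases hi : i ∈ S <;> by_cases hj : j ∈ S
      · simp only [hi, hj, if_pos] at hij; exact h13 i hi j hj hij
      · simp only [hi, hj, if_pos, if_neg, if_false] at hij
        exact absurd ((h11 i hi).1) (by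
          rw [hij]
          exact fun hmem => (Finset.mem_compl.1 (h21 j (Finset.mem_compl.2 hj)).1) hmem)
      · simp only [hi, hj, if_pos, if_neg, if_false] at hij
        exact absurd ((h11 j hj).1) (by
          rw [← hij]
          exact fun hmem => (Finset.mem_compl.1 (h21 i (Finset.mem_compl.2 hi)).1) hmem)
      · simp only [hi, hj, if_neg, if_false] at hij
        exact h23 i (Finset.mem_compl.2 hi) j (Finset.mem_compl.2 hj) hij
    constructor
    · refine mem_Mch.2 ⟨fun i _ => ⟨Finset.mem_univ _, ?_⟩, fun i hi => absurd (Finset.mem_univ i) hi,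
        fun i _ j _ => hinj i j⟩
      by_cases hi : i ∈ S
      · simp only [hi, if_pos]; exact (h11 i hi).2
      · simp only [hi, if_neg, if_false]
        exact (h21 i (Finset.mem_compl.2 hi)).2
    · have hsub : S.image (fun x => if x ∈ S then f₁ x else f₂ x) ⊆ T := by
        intro y hy
        obtain ⟨x, hx, hfx⟩ := Finset.mem_image.1 hy
        rw [← hfx]; simp only [hx, if_pos]
        exact (h11 x hx).1
      apply Finset.eq_of_subset_of_card_le hsub
      rw [Finset.card_image_of_injOn (fun i _ j _ => hinj i j), hSk, hTk]
  · intro F hF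
    simp only [Finset.mem_coe, Finset.mem_filter] at hF
    funext x
    by_cases hx : x ∈ S <;> simp [hx]
  · rintro ⟨f₁, f₂⟩ hp
    obtain ⟨hp1, hp2⟩ := Finset.mem_product.1 (Finset.mem_coe.1 hp)
    obtain ⟨h11, h12, h13⟩ := mem_Mch.1 hp1
    obtain ⟨h21, h22, h23⟩ := mem_Mch.1 hp2
    dsimp only at h11 h12 h13 h21 h22 h23
    have e1 : f₁ = fun x => if x ∈ S then (if x ∈ S then f₁ x else f₂ x) else x := by
      funext x
      by_cases hx : x ∈ S
      · simp [hx]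
      · simp [hx, h12 x hx]
    have e2 : f₂ = fun x => if x ∈ S then x else (if x ∈ S then f₁ x else f₂ x) := by
      funext x
      by_cases hx : x ∈ S
      · simp [hx, h22 x (by simp [hx])]
      · simp [hx]
    exact Prod.ext (by dsimp only; rw [← e1]) (by dsimp only; rw [← e2])

lemma laplace (hS : S ∈ powersetCard k (univ : Finset (Fin n))) :
    (Mch R univ univ).card
      = ∑ T ∈ powersetCard k (univ : Finset (Fin n)), (Mch R S T).card * (Mch R Sᶜ Tᶜ).card := by
  classical
  have hSk : S.card = k := (mem_powersetCard.1 hS).2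
  rw [Finset.card_eq_sum_card_fiberwise (f := fun F => S.image F)
    (t := powersetCard k (univ : Finset (Fin n)))]
  · exact Finset.sum_congr rfl fun T hT => fiber_card hS hT
  · intro F hF
    obtain ⟨-, -, h3⟩ := mem_Mch.1 hF
    simp only [Finset.mem_coe, Finset.mem_powersetCard]
    exact ⟨Finset.subset_univ _,
      by rw [Finset.card_image_of_injOn (fun i _ j _ hij => h3 i (by simp) j (by simp) hij), hSk]⟩


section Graph

variable (G : SimpleGraph (Fin n ⊕ Fin n))

def Rel : Fin n → Fin n → Prop := fun i j => G.Adj (Sum.inl i) (Sum.inr j)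

open Classical in
noncomputable def Pfin : Finset (Equiv.Perm (Fin n ⊕ Fin n)) :=
  Finset.univ.filter (fun σ => ∀ v, σ v = v ∨ G.Adj v (σ v))

lemma mem_Pfin {σ : Equiv.Perm (Fin n ⊕ Fin n)} :
    σ ∈ Pfin G ↔ ∀ v, σ v = v ∨ G.Adj v (σ v) := by
  classical
  simp [Pfin]

def xL (σ : Equiv.Perm (Fin n ⊕ Fin n)) (x : Fin n) : Fin n :=
  Sum.elim (fun _ => x) id (σ (Sum.inl x))

def xR (σ : Equiv.Perm (Fin n ⊕ Fin n)) (y : Fin n) : Fin n :=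
  Sum.elim id (fun _ => y) (σ (Sum.inr y))

def mvL (σ : Equiv.Perm (Fin n ⊕ Fin n)) : Finset (Fin n) :=
  Finset.univ.filter (fun x => σ (Sum.inl x) ≠ Sum.inl x)

def mvR (σ : Equiv.Perm (Fin n ⊕ Fin n)) : Finset (Fin n) :=
  Finset.univ.filter (fun y => σ (Sum.inr y) ≠ Sum.inr y)

lemma mem_mvL {σ : Equiv.Perm (Fin n ⊕ Fin n)} {x : Fin n} :
    x ∈ mvL σ ↔ σ (Sum.inl x) ≠ Sum.inl x := by simp [mvL]

lemma mem_mvR {σ : Equiv.Perm (Fin n ⊕ Fin n)} {y : Fin n} :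
    y ∈ mvR σ ↔ σ (Sum.inr y) ≠ Sum.inr y := by simp [mvR]

variable {G}
variable (hbip : ∀ v w, G.Adj v w →
      (∃ i j, v = Sum.inl i ∧ w = Sum.inr j) ∨ (∃ i j, v = Sum.inr i ∧ w = Sum.inl j))

include hbip

lemma sigma_inl {σ : Equiv.Perm (Fin n ⊕ Fin n)} (hσ : σ ∈ Pfin G) {x : Fin n}
    (hx : σ (Sum.inl x) ≠ Sum.inl x) :
    σ (Sum.inl x) = Sum.inr (xL σ x) ∧ G.Adj (Sum.inl x) (Sum.inr (xL σ x)) := by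
  have hadj : G.Adj (Sum.inl x) (σ (Sum.inl x)) := ((mem_Pfin G).1 hσ _).resolve_left hx
  rcases hbip _ _ hadj with ⟨i, j, hv, hw⟩ | ⟨i, j, hv, hw⟩
  · refine ⟨by simp [xL, hw], ?_⟩
    have h2 := hadj
    rw [hw] at h2
    simpa [xL, hw] using h2
  · exact absurd hv (by simp)

lemma sigma_inr {σ : Equiv.Perm (Fin n ⊕ Fin n)} (hσ : σ ∈ Pfin G) {y : Fin n}
    (hy : σ (Sum.inr y) ≠ Sum.inr y) :
    σ (Sum.inr y) = Sum.inl (xR σ y) ∧ G.Adj (Sum.inl (xR σ y)) (Sum.inr y) := by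
  have hadj : G.Adj (Sum.inr y) (σ (Sum.inr y)) := ((mem_Pfin G).1 hσ _).resolve_left hy
  rcases hbip _ _ hadj with ⟨i, j, hv, hw⟩ | ⟨i, j, hv, hw⟩
  · exact absurd hv (by simp)
  · refine ⟨by simp [xR, hw], ?_⟩
    have h2 := hadj.symm
    rw [hw] at h2
    simpa [xR, hw] using h2

omit hbip

lemma inv_mem_Pfin {σ : Equiv.Perm (Fin n ⊕ Fin n)} (hσ : σ ∈ Pfin G) : σ⁻¹ ∈ Pfin G := by
  rw [mem_Pfin] at hσ ⊢
  intro v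
  rcases hσ (σ⁻¹ v) with h | h
  · left
    conv_lhs => rw [← h]
    simp
  · right
    have : σ (σ⁻¹ v) = v := by simp
    rw [this] at h
    exact h.symm

lemma mvL_inv {σ : Equiv.Perm (Fin n ⊕ Fin n)} : mvL σ⁻¹ = mvL σ := by
  ext x
  simp only [mem_mvL, not_iff_not]
  constructor
  · intro h
    conv_lhs => rw [← h]
    simp
  · intro h
    conv_lhs => rw [← h]
    simp

lemma mvR_inv {σ : Equiv.Perm (Fin n ⊕ Fin n)} : mvR σ⁻¹ = mvR σ := by
  ext y
  simp only [mem_mvR, not_iff_not]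
  constructor
  · intro h
    conv_lhs => rw [← h]
    simp
  · intro h
    conv_lhs => rw [← h]
    simp

include hbip

lemma xL_mem {σ : Equiv.Perm (Fin n ⊕ Fin n)} (hσ : σ ∈ Pfin G) :
    xL σ ∈ Mch (Rel G) (mvL σ) (mvR σ) := by
  refine mem_Mch.2 ⟨fun x hx => ?_, fun x hx => ?_, fun x hx y hy hxy => ?_⟩
  · obtain ⟨hEq, hAdj⟩ := sigma_inl hbip hσ (mem_mvL.1 hx)
    refine ⟨mem_mvR.2 fun hfix => ?_, hAdj⟩
    have : σ (Sum.inr (xL σ x)) = σ (Sum.inl x) := by rw [hfix, hEq]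
    exact (by simp : (Sum.inr (xL σ x) : Fin n ⊕ Fin n) ≠ Sum.inl x) (σ.injective this)
  · rw [mem_mvL, not_not] at hx
    simp [xL, hx]
  · obtain ⟨hEq, -⟩ := sigma_inl hbip hσ (mem_mvL.1 hx)
    obtain ⟨hEq', -⟩ := sigma_inl hbip hσ (mem_mvL.1 hy)
    have : σ (Sum.inl x) = σ (Sum.inl y) := by rw [hEq, hEq', hxy]
    simpa using σ.injective this

lemma card_mv_eq {σ : Equiv.Perm (Fin n ⊕ Fin n)} (hσ : σ ∈ Pfin G) :
    (mvL σ).card = (mvR σ).card := by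
  obtain ⟨h1, -, h3⟩ := mem_Mch.1 (xL_mem hbip hσ)
  apply le_antisymm
  · exact Finset.card_le_card_of_injOn (xL σ) (fun x hx => (h1 x hx).1) fun x hx y hy => h3 x hx y hy
  · apply Finset.card_le_card_of_injOn (xR σ)
    · intro y hy
      obtain ⟨hEq, -⟩ := sigma_inr hbip hσ (mem_mvR.1 hy)
      refine mem_mvL.2 fun hfix => ?_
      have : σ (σ (Sum.inr y)) = σ (Sum.inr y) := by
        conv_lhs => rw [hEq, hfix, ← hEq]
      exact (mem_mvR.1 hy) (σ.injective this)
    · intro y hy y' hy' hyy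
      obtain ⟨hEq, -⟩ := sigma_inr hbip hσ (mem_mvR.1 hy)
      obtain ⟨hEq', -⟩ := sigma_inr hbip hσ (mem_mvR.1 hy')
      have : σ (Sum.inr y) = σ (Sum.inr y') := by rw [hEq, hEq', hyy]
      simpa using σ.injective this

omit hbip

open Classical in
noncomputable def glueFun (S : Finset (Fin n)) (f g : Fin n → Fin n) :
    (Fin n ⊕ Fin n) → (Fin n ⊕ Fin n) :=
  Sum.elim (fun x => if x ∈ S then Sum.inr (f x) else Sum.inl x)
    (fun y => if h : ∃ x ∈ S, g x = y then Sum.inl h.choose else Sum.inr y)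

lemma Mch_surj {R : Fin n → Fin n → Prop} {S T : Finset (Fin n)} {g : Fin n → Fin n}
    (hg : g ∈ Mch R S T) (hST : S.card = T.card) : ∀ y ∈ T, ∃ x ∈ S, g x = y := by
  obtain ⟨h1, -, h3⟩ := mem_Mch.1 hg
  have himg : S.image g = T := by
    apply Finset.eq_of_subset_of_card_le
    · intro y hy
      obtain ⟨x, hx, hgx⟩ := Finset.mem_image.1 hy
      exact hgx ▸ (h1 x hx).1
    · rw [Finset.card_image_of_injOn h3, hST]
  intro y hy
  rw [← himg] at hy
  obtain ⟨x, hx, hgx⟩ := Finset.mem_image.1 hy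
  exact ⟨x, hx, hgx⟩

lemma glueFun_inr_mem {R : Fin n → Fin n → Prop} {S T : Finset (Fin n)}
    {f g : Fin n → Fin n} (hg : g ∈ Mch R S T) (hST : S.card = T.card) {y : Fin n}
    (hy : y ∈ T) : ∃ x ∈ S, glueFun S f g (Sum.inr y) = Sum.inl x ∧ g x = y := by
  classical
  have h : ∃ x ∈ S, g x = y := Mch_surj hg hST y hy
  refine ⟨h.choose, h.choose_spec.1, ?_, h.choose_spec.2⟩
  simp only [glueFun, Sum.elim_inr, dif_pos h]

lemma glueFun_inr_not_mem {R : Fin n → Fin n → Prop} {S T : Finset (Fin n)}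
    {f g : Fin n → Fin n} (hg : g ∈ Mch R S T) {y : Fin n}
    (hy : y ∉ T) : glueFun S f g (Sum.inr y) = Sum.inr y := by
  classical
  have h : ¬ ∃ x ∈ S, g x = y := by
    rintro ⟨x, hx, rfl⟩
    exact hy ((mem_Mch.1 hg).1 x hx).1
  simp only [glueFun, Sum.elim_inr, dif_neg h]

lemma glue_bijective {R : Fin n → Fin n → Prop} {S T : Finset (Fin n)}
    {f g : Fin n → Fin n} (hf : f ∈ Mch R S T) (hg : g ∈ Mch R S T)
    (hST : S.card = T.card) : Function.Bijective (glueFun S f g) := by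
  classical
  rw [← Finite.injective_iff_bijective]
  obtain ⟨hf1, -, hf3⟩ := mem_Mch.1 hf
  obtain ⟨hg1, -, hg3⟩ := mem_Mch.1 hg
  intro v w hvw
  match v, w with
  | Sum.inl x, Sum.inl x' =>
    by_cases hx : x ∈ S <;> by_cases hx' : x' ∈ S <;>
      simp only [glueFun, Sum.elim_inl, hx, hx', if_pos, if_neg, if_false] at hvw
    · rw [Sum.inr.injEq] at hvw
      rw [hf3 x hx x' hx' hvw]
    · exact absurd hvw (by simp)
    · exact absurd hvw (by simp)
    · exact hvw
  | Sum.inl x, Sum.inr y =>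
    exfalso
    by_cases hy : y ∈ T
    · obtain ⟨x', hx', heq, -⟩ := glueFun_inr_mem (f := f) hg hST hy
      rw [heq] at hvw
      by_cases hx : x ∈ S <;>
        simp only [glueFun, Sum.elim_inl, hx, if_pos, if_neg, if_false] at hvw
      · exact absurd hvw (by simp)
      · rw [Sum.inl.injEq] at hvw
        exact hx (hvw ▸ hx')
    · rw [glueFun_inr_not_mem (f := f) hg hy] at hvw
      by_cases hx : x ∈ S <;>
        simp only [glueFun, Sum.elim_inl, hx, if_pos, if_neg, if_false] at hvw
      · rw [Sum.inr.injEq] at hvw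
        exact hy (hvw ▸ (hf1 x hx).1)
      · exact absurd hvw (by simp)
  | Sum.inr y, Sum.inl x =>
    exfalso
    by_cases hy : y ∈ T
    · obtain ⟨x', hx', heq, -⟩ := glueFun_inr_mem (f := f) hg hST hy
      rw [heq] at hvw
      by_cases hx : x ∈ S <;>
        simp only [glueFun, Sum.elim_inl, hx, if_pos, if_neg, if_false] at hvw
      · exact absurd hvw (by simp)
      · rw [Sum.inl.injEq] at hvw
        exact hx (hvw ▸ hx')
    · rw [glueFun_inr_not_mem (f := f) hg hy] at hvw
      by_cases hx : x ∈ S <;>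
        simp only [glueFun, Sum.elim_inl, hx, if_pos, if_neg, if_false] at hvw
      · rw [Sum.inr.injEq] at hvw
        exact hy (hvw ▸ (hf1 x hx).1)
      · exact absurd hvw (by simp)
  | Sum.inr y, Sum.inr y' =>
    by_cases hy : y ∈ T <;> by_cases hy' : y' ∈ T
    · obtain ⟨x, hx, heq, hgx⟩ := glueFun_inr_mem (f := f) hg hST hy
      obtain ⟨x', hx', heq', hgx'⟩ := glueFun_inr_mem (f := f) hg hST hy'
      rw [heq, heq', Sum.inl.injEq] at hvw
      rw [← hgx, ← hgx', hvw]
    · rw [glueFun_inr_not_mem (f := f) hg hy'] at hvw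
      obtain ⟨x, hx, heq, hgx⟩ := glueFun_inr_mem (f := f) hg hST hy
      rw [heq] at hvw
      exact absurd hvw (by simp)
    · rw [glueFun_inr_not_mem (f := f) hg hy] at hvw
      obtain ⟨x', hx', heq', hgx'⟩ := glueFun_inr_mem (f := f) hg hST hy'
      rw [heq'] at hvw
      exact absurd hvw (by simp)
    · rw [glueFun_inr_not_mem (f := f) hg hy, glueFun_inr_not_mem (f := f) hg hy',
        Sum.inr.injEq] at hvw
      rw [hvw]

lemma rel_adj {i j : Fin n} : Rel G i j ↔ G.Adj (Sum.inl i) (Sum.inr j) := Iff.rfl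

include hbip

open Classical in
lemma fiberP_card {S T : Finset (Fin n)} (hST : S.card = T.card) :
    ((Pfin G).filter (fun σ => mvL σ = S ∧ mvR σ = T)).card
      = (Mch (Rel G) S T).card * (Mch (Rel G) S T).card := by
  classical
  rw [← Finset.card_product]
  apply Finset.card_nbij' (fun σ => (xL σ, xL σ⁻¹))
    (fun p => if h : Function.Bijective (glueFun S p.1 p.2) then Equiv.ofBijective _ h else 1)
  · intro σ hσ'
    rw [Finset.mem_coe, Finset.mem_filter] at hσ'
    obtain ⟨hP, hSe, hTe⟩ := hσ'
    refine Finset.mem_product.2 ⟨?_, ?_⟩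
    · have h1 := xL_mem hbip hP
      rwa [hSe, hTe] at h1
    · have h2 := xL_mem hbip (inv_mem_Pfin hP)
      rwa [mvL_inv, mvR_inv, hSe, hTe] at h2
  · rintro ⟨f, g⟩ hp
    obtain ⟨hf, hg⟩ := Finset.mem_product.1 hp
    dsimp only at hf hg ⊢
    have hbij := glue_bijective hf hg hST
    rw [dif_pos hbij]
    obtain ⟨hf1, hf2, hf3⟩ := mem_Mch.1 hf
    obtain ⟨hg1, hg2, hg3⟩ := mem_Mch.1 hg
    have happ : ∀ v, (Equiv.ofBijective _ hbij) v = glueFun S f g v := fun v => rfl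
    rw [Finset.mem_coe, Finset.mem_filter]
    refine ⟨(mem_Pfin G).2 fun v => ?_, ?_, ?_⟩
    · match v with
      | Sum.inl x =>
        by_cases hx : x ∈ S
        · right
          rw [happ, show glueFun S f g (Sum.inl x) = Sum.inr (f x) by simp [glueFun, hx]]
          exact (hf1 x hx).2
        · left
          rw [happ]
          simp [glueFun, hx]
      | Sum.inr y =>
        by_cases hy : y ∈ T
        · right
          obtain ⟨x, hx, heq, hgx⟩ := glueFun_inr_mem (f := f) hg hST hy
          rw [happ, heq]
          have : Rel G x y := hgx ▸ (hg1 x hx).2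
          exact (rel_adj.1 this).symm
        · left
          rw [happ, glueFun_inr_not_mem (f := f) hg hy]
    · ext x
      rw [mem_mvL, happ]
      by_cases hx : x ∈ S <;> simp [glueFun, hx]
    · ext y
      rw [mem_mvR, happ]
      by_cases hy : y ∈ T
      · obtain ⟨x, hx, heq, -⟩ := glueFun_inr_mem (f := f) hg hST hy
        simp [heq, hy]
      · simp [glueFun_inr_not_mem (f := f) hg hy, hy]
  · intro σ hσ'
    simp only [Finset.mem_coe, Finset.mem_filter] at hσ'
    obtain ⟨hP, hSe, hTe⟩ := hσ'
    have hf : xL σ ∈ Mch (Rel G) S T := by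
      have h1 := xL_mem hbip hP
      rwa [hSe, hTe] at h1
    have hg : xL σ⁻¹ ∈ Mch (Rel G) S T := by
      have h2 := xL_mem hbip (inv_mem_Pfin hP)
      rwa [mvL_inv, mvR_inv, hSe, hTe] at h2
    have hbij := glue_bijective hf hg hST
    dsimp only
    rw [dif_pos hbij]
    refine Equiv.ext fun v => ?_
    have happ : ∀ v, (Equiv.ofBijective _ hbij) v = glueFun S (xL σ) (xL σ⁻¹) v :=
      fun v => rfl
    rw [happ]
    match v with
    | Sum.inl x =>
      by_cases hx : x ∈ S
      · rw [show glueFun S (xL σ) (xL σ⁻¹) (Sum.inl x) = Sum.inr (xL σ x) by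
          simp [glueFun, hx]]
        exact (sigma_inl hbip hP (mem_mvL.1 (by rw [hSe]; exact hx))).1.symm
      · have hfix : σ (Sum.inl x) = Sum.inl x := by
          by_contra hc
          exact hx (by rw [← hSe]; exact mem_mvL.2 hc)
        rw [show glueFun S (xL σ) (xL σ⁻¹) (Sum.inl x) = Sum.inl x by simp [glueFun, hx]]
        exact hfix.symm
    | Sum.inr y =>
      by_cases hy : y ∈ T
      · obtain ⟨x, hx, heq, hgx⟩ := glueFun_inr_mem (f := xL σ) hg hST hy
        rw [heq]
        have hxm : σ⁻¹ (Sum.inl x) ≠ Sum.inl x := by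
          rw [← mem_mvL, mvL_inv, hSe]
          exact hx
        have h2 := (sigma_inl hbip (inv_mem_Pfin hP) hxm).1
        rw [hgx] at h2
        rw [← h2]
        simp
      · have hfix : σ (Sum.inr y) = Sum.inr y := by
          by_contra hc
          exact hy (by rw [← hTe]; exact mem_mvR.2 hc)
        rw [glueFun_inr_not_mem (f := xL σ) hg hy, hfix]
  · rintro ⟨f, g⟩ hp
    obtain ⟨hf, hg⟩ := Finset.mem_product.1 (Finset.mem_coe.1 hp)
    dsimp only at hf hg ⊢
    have hbij := glue_bijective hf hg hST
    rw [dif_pos hbij]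
    obtain ⟨hf1, hf2, hf3⟩ := mem_Mch.1 hf
    obtain ⟨hg1, hg2, hg3⟩ := mem_Mch.1 hg
    have happ : ∀ v, (Equiv.ofBijective _ hbij) v = glueFun S f g v := fun v => rfl
    refine Prod.ext ?_ ?_ <;> dsimp only
    · funext x
      by_cases hx : x ∈ S
      · have h1 : (Equiv.ofBijective _ hbij) (Sum.inl x) = Sum.inr (f x) := by
          rw [happ]; simp [glueFun, hx]
        simp [xL, h1]
      · have h1 : (Equiv.ofBijective _ hbij) (Sum.inl x) = Sum.inl x := by
          rw [happ]; simp [glueFun, hx]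
        simp [xL, h1, hf2 x hx]
    · funext x
      by_cases hx : x ∈ S
      · have hgx : (Equiv.ofBijective _ hbij) (Sum.inr (g x)) = Sum.inl x := by
          obtain ⟨x', hx', heq, hgx'⟩ := glueFun_inr_mem (f := f) hg hST (hg1 x hx).1
          rw [happ, heq]
          exact congrArg Sum.inl (hg3 x' hx' x hx hgx')
        have hinv : (Equiv.ofBijective _ hbij)⁻¹ (Sum.inl x) = Sum.inr (g x) := by
          rw [Equiv.Perm.inv_eq_iff_eq]; exact hgx.symm
        simp [xL, hinv]
      · have h1 : (Equiv.ofBijective _ hbij) (Sum.inl x) = Sum.inl x := by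
          rw [happ]; simp [glueFun, hx]
        have hinv : (Equiv.ofBijective _ hbij)⁻¹ (Sum.inl x) = Sum.inl x := by
          rw [Equiv.Perm.inv_eq_iff_eq]; exact h1.symm
        simp [xL, hinv, hg2 x hx]

lemma Pfin_card :
    (Pfin G).card = ∑ k ∈ range (n + 1), ∑ S ∈ powersetCard k (univ : Finset (Fin n)),
      ∑ T ∈ powersetCard k (univ : Finset (Fin n)),
        (Mch (Rel G) S T).card * (Mch (Rel G) S T).card := by
  classical
  rw [Finset.card_eq_sum_card_fiberwise (f := fun σ => (mvL σ).card) (t := range (n + 1))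
    (fun σ _ => Finset.mem_range.2 (Nat.lt_succ_of_le (by
      simpa using Finset.card_le_univ (mvL σ))))]
  refine Finset.sum_congr rfl fun k hk => ?_
  rw [Finset.card_eq_sum_card_fiberwise (f := fun σ => mvL σ)
    (t := powersetCard k (univ : Finset (Fin n)))
    (fun σ hσ => Finset.mem_powersetCard_univ.2 (Finset.mem_filter.1 hσ).2)]
  refine Finset.sum_congr rfl fun S hS => ?_
  have hSk : S.card = k := Finset.mem_powersetCard_univ.1 hS
  rw [Finset.filter_filter]
  have hcond : ∀ σ : Equiv.Perm (Fin n ⊕ Fin n),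
      ((mvL σ).card = k ∧ mvL σ = S) ↔ mvL σ = S := by
    intro σ
    constructor
    · exact fun h => h.2
    · exact fun h => ⟨by rw [h, hSk], h⟩
  rw [Finset.filter_congr (fun σ _ => hcond σ)]
  rw [Finset.card_eq_sum_card_fiberwise (f := fun σ => mvR σ)
    (t := powersetCard k (univ : Finset (Fin n)))
    (fun σ hσ => by
      obtain ⟨hP, hSe⟩ := Finset.mem_filter.1 hσ
      refine Finset.mem_powersetCard_univ.2 ?_
      rw [← card_mv_eq hbip hP, hSe, hSk])]
  refine Finset.sum_congr rfl fun T hT => ?_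
  have hTk : T.card = k := Finset.mem_powersetCard_univ.1 hT
  rw [Finset.filter_filter]
  exact fiberP_card hbip (by rw [hSk, hTk])

open Classical in
noncomputable def Dfin (G : SimpleGraph (Fin n ⊕ Fin n)) :
    Finset (Equiv.Perm (Fin n ⊕ Fin n)) :=
  Finset.univ.filter (fun σ => ∀ v, G.Adj v (σ v))

lemma Dfin_card : (Dfin G).card
    = (Mch (Rel G) univ univ).card * (Mch (Rel G) univ univ).card := by
  classical
  have heq : Dfin G = (Pfin G).filter (fun σ => mvL σ = univ ∧ mvR σ = univ) := by
    ext σ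
    simp only [Dfin, Finset.mem_filter, Finset.mem_univ, true_and]
    constructor
    · intro h
      refine ⟨(mem_Pfin G).2 fun v => Or.inr (h v), ?_, ?_⟩
      · refine Finset.eq_univ_iff_forall.2 fun x => mem_mvL.2 fun hfix => ?_
        exact G.irrefl (hfix ▸ h (Sum.inl x))
      · refine Finset.eq_univ_iff_forall.2 fun y => mem_mvR.2 fun hfix => ?_
        exact G.irrefl (hfix ▸ h (Sum.inr y))
    · rintro ⟨hP, hL, hR⟩ v
      match v with
      | Sum.inl x =>
        have : σ (Sum.inl x) ≠ Sum.inl x := mem_mvL.1 (hL ▸ Finset.mem_univ x)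
        exact ((mem_Pfin G).1 hP _).resolve_left this
      | Sum.inr y =>
        have : σ (Sum.inr y) ≠ Sum.inr y := mem_mvR.1 (hR ▸ Finset.mem_univ y)
        exact ((mem_Pfin G).1 hP _).resolve_left this
  rw [heq]
  exact fiberP_card hbip rfl

omit hbip in
lemma key_term {k : ℕ} (hk : k ≤ n) :
    ((Mch (Rel G) univ univ).card ^ 2 : ℚ) ≤ ((Nat.factorial (n - k) : ℚ)) ^ 2 *
      ∑ S ∈ powersetCard k (univ : Finset (Fin n)),
        ∑ T ∈ powersetCard k (univ : Finset (Fin n)), ((Mch (Rel G) S T).card ^ 2 : ℚ) := by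
  classical
  set a : ℕ := (Mch (Rel G) univ univ).card with ha
  set C : ℕ := n.choose k with hC
  set m : ℕ := Nat.factorial (n - k) with hm
  have hcard_pcd : (powersetCard k (univ : Finset (Fin n))).card = C := by
    rw [Finset.card_powersetCard]
    simp [hC]
  -- Laplace bound: for each S of size k, a ≤ m * ∑_T p S T
  have hlap : ∀ S ∈ powersetCard k (univ : Finset (Fin n)),
      a ≤ m * ∑ T ∈ powersetCard k (univ : Finset (Fin n)), (Mch (Rel G) S T).card := by
    intro S hS
    rw [ha, laplace (R := Rel G) hS, Finset.mul_sum]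
    apply Finset.sum_le_sum
    intro T hT
    have hSk : S.card = k := Finset.mem_powersetCard_univ.1 hS
    have hTk : T.card = k := Finset.mem_powersetCard_univ.1 hT
    have hcompl : Sᶜ.card = n - k := by
      rw [Finset.card_compl, hSk, Fintype.card_fin]
    have hcomplT : Tᶜ.card = n - k := by
      rw [Finset.card_compl, hTk, Fintype.card_fin]
    have := Mch_card_le (R := Rel G) (S := Sᶜ) (T := Tᶜ) (by rw [hcompl, hcomplT])
    rw [hcompl] at this
    calc (Mch (Rel G) S T).card * (Mch (Rel G) Sᶜ Tᶜ).card
        ≤ (Mch (Rel G) S T).card * m := Nat.mul_le_mul_left _ this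
      _ = m * (Mch (Rel G) S T).card := Nat.mul_comm _ _
  -- Sum over S : C * a ≤ m * Σ₁
  have hsum1 : C * a ≤ m * ∑ S ∈ powersetCard k (univ : Finset (Fin n)),
      ∑ T ∈ powersetCard k (univ : Finset (Fin n)), (Mch (Rel G) S T).card := by
    calc C * a = ∑ _S ∈ powersetCard k (univ : Finset (Fin n)), a := by
          rw [Finset.sum_const, hcard_pcd, smul_eq_mul]
      _ ≤ ∑ S ∈ powersetCard k (univ : Finset (Fin n)),
          m * ∑ T ∈ powersetCard k (univ : Finset (Fin n)), (Mch (Rel G) S T).card :=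
          Finset.sum_le_sum hlap
      _ = _ := by rw [← Finset.mul_sum]
  -- Cauchy–Schwarz
  have hCS : ((∑ S ∈ powersetCard k (univ : Finset (Fin n)),
        ∑ T ∈ powersetCard k (univ : Finset (Fin n)), (Mch (Rel G) S T).card : ℕ) : ℚ) ^ 2
      ≤ (C : ℚ) ^ 2 * ∑ S ∈ powersetCard k (univ : Finset (Fin n)),
        ∑ T ∈ powersetCard k (univ : Finset (Fin n)), ((Mch (Rel G) S T).card ^ 2 : ℚ) := by
    have := sq_sum_le_card_mul_sum_sq
      (s := (powersetCard k (univ : Finset (Fin n))) ×ˢ (powersetCard k (univ : Finset (Fin n))))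
      (f := fun p => ((Mch (Rel G) p.1 p.2).card : ℚ))
    rw [Finset.card_product, hcard_pcd, Finset.sum_product, Finset.sum_product] at this
    push_cast
    calc (∑ S ∈ powersetCard k (univ : Finset (Fin n)),
          ∑ T ∈ powersetCard k (univ : Finset (Fin n)), ((Mch (Rel G) S T).card : ℚ)) ^ 2
        ≤ (C * C : ℕ) * ∑ S ∈ powersetCard k (univ : Finset (Fin n)),
          ∑ T ∈ powersetCard k (univ : Finset (Fin n)), ((Mch (Rel G) S T).card : ℚ) ^ 2 :=
          this
      _ = (C : ℚ) ^ 2 * ∑ S ∈ powersetCard k (univ : Finset (Fin n)),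
          ∑ T ∈ powersetCard k (univ : Finset (Fin n)), ((Mch (Rel G) S T).card : ℚ) ^ 2 := by
          push_cast; ring
  -- combine
  have hCpos : (0 : ℚ) < (C : ℚ) ^ 2 := by
    have : 0 < C := Nat.choose_pos hk
    positivity
  rw [← mul_le_mul_iff_right₀ hCpos]
  have hq1 : ((C : ℚ) * a) ^ 2 ≤ ((m : ℚ) * ∑ S ∈ powersetCard k (univ : Finset (Fin n)),
      ∑ T ∈ powersetCard k (univ : Finset (Fin n)), ((Mch (Rel G) S T).card : ℚ)) ^ 2 := by
    have h1 : ((C * a : ℕ) : ℚ) ≤ ((m * ∑ S ∈ powersetCard k (univ : Finset (Fin n)),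
        ∑ T ∈ powersetCard k (univ : Finset (Fin n)), (Mch (Rel G) S T).card : ℕ) : ℚ) :=
      Nat.cast_le.2 hsum1
    push_cast at h1
    have h0 : (0 : ℚ) ≤ (C : ℚ) * a := by positivity
    exact pow_le_pow_left₀ h0 h1 2
  calc (C : ℚ) ^ 2 * (a : ℚ) ^ 2 = ((C : ℚ) * a) ^ 2 := by ring
    _ ≤ ((m : ℚ) * ∑ S ∈ powersetCard k (univ : Finset (Fin n)),
        ∑ T ∈ powersetCard k (univ : Finset (Fin n)), ((Mch (Rel G) S T).card : ℚ)) ^ 2 := hq1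
    _ = (m : ℚ) ^ 2 * (∑ S ∈ powersetCard k (univ : Finset (Fin n)),
        ∑ T ∈ powersetCard k (univ : Finset (Fin n)), ((Mch (Rel G) S T).card : ℚ)) ^ 2 := by
        ring
    _ ≤ (m : ℚ) ^ 2 * ((C : ℚ) ^ 2 * ∑ S ∈ powersetCard k (univ : Finset (Fin n)),
        ∑ T ∈ powersetCard k (univ : Finset (Fin n)), ((Mch (Rel G) S T).card ^ 2 : ℚ)) := by
        apply mul_le_mul_of_nonneg_left _ (by positivity)
        convert hCS using 2
        · rfl
        · simp only [Nat.cast_sum]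
    _ = (C : ℚ) ^ 2 * ((m : ℚ) ^ 2 * ∑ S ∈ powersetCard k (univ : Finset (Fin n)),
        ∑ T ∈ powersetCard k (univ : Finset (Fin n)), ((Mch (Rel G) S T).card ^ 2 : ℚ)) := by
        ring

omit hbip

lemma total_of_card (h : (Mch (Rel G) univ univ).card = Nat.factorial n) :
    ∀ i j : Fin n, Rel G i j := by
  classical
  have hsub : Mch (Rel G) univ univ ⊆
      Finset.image (fun e : Equiv.Perm (Fin n) => ⇑e) Finset.univ := by
    intro f hf
    obtain ⟨-, -, h3⟩ := mem_Mch.1 hf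
    have hinj : Function.Injective f := fun i j hij => h3 i (by simp) j (by simp) hij
    have hbij : Function.Bijective f := (Finite.injective_iff_bijective).1 hinj
    exact Finset.mem_image.2 ⟨Equiv.ofBijective f hbij, Finset.mem_univ _, rfl⟩
  have hcardI : (Finset.image (fun e : Equiv.Perm (Fin n) => ⇑e) Finset.univ).card
      = Nat.factorial n := by
    rw [Finset.card_image_of_injective _ (DFunLike.coe_injective), Finset.card_univ,
      Fintype.card_perm, Fintype.card_fin]
  have heq : Mch (Rel G) univ univ
      = Finset.image (fun e : Equiv.Perm (Fin n) => ⇑e) Finset.univ :=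
    Finset.eq_of_subset_of_card_le hsub (by rw [hcardI, h])
  intro i j
  have hmem : ⇑(Equiv.swap i j) ∈ Mch (Rel G) univ univ := by
    rw [heq]
    exact Finset.mem_image.2 ⟨Equiv.swap i j, Finset.mem_univ _, rfl⟩
  have := (mem_Mch.1 hmem).1 i (by simp)
  rw [Equiv.swap_apply_left] at this
  exact this.2

end Graph
end Stmt13Aux

open Finset Stmt13Aux in
/-- For a balanced bipartite graph `G` on parts of size `n`, the derangement-to-permutation
ratio is at most `(∑_{k=0}^n 1/(k!)²)⁻¹`, with equality iff `G = K_{n,n}`. -/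
theorem stmt_13 (n : ℕ) (G : SimpleGraph (Fin n ⊕ Fin n))
    (hbip : ∀ v w, G.Adj v w →
      (∃ i j, v = Sum.inl i ∧ w = Sum.inr j) ∨ (∃ i j, v = Sum.inr i ∧ w = Sum.inl j)) :
    (({σ : Equiv.Perm (Fin n ⊕ Fin n) | ∀ v, G.Adj v (σ v)}.ncard : ℚ) /
        ({σ : Equiv.Perm (Fin n ⊕ Fin n) | ∀ v, σ v = v ∨ G.Adj v (σ v)}.ncard : ℚ) ≤
      (∑ k ∈ range (n + 1), (1 : ℚ) / (Nat.factorial k) ^ 2)⁻¹) ∧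
    ((({σ : Equiv.Perm (Fin n ⊕ Fin n) | ∀ v, G.Adj v (σ v)}.ncard : ℚ) /
        ({σ : Equiv.Perm (Fin n ⊕ Fin n) | ∀ v, σ v = v ∨ G.Adj v (σ v)}.ncard : ℚ) =
      (∑ k ∈ range (n + 1), (1 : ℚ) / (Nat.factorial k) ^ 2)⁻¹) ↔
      ∀ i j, G.Adj (Sum.inl i) (Sum.inr j)) := by
  classical
  set a : ℕ := (Mch (Rel G) univ univ).card with ha
  have hDn : ({σ : Equiv.Perm (Fin n ⊕ Fin n) | ∀ v, G.Adj v (σ v)}.ncard) = a * a := by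
    have h1 : {σ : Equiv.Perm (Fin n ⊕ Fin n) | ∀ v, G.Adj v (σ v)} = ↑(Dfin G) := by
      ext σ; simp [Dfin]
    rw [h1, Set.ncard_coe_finset, Dfin_card hbip]
  have hPn : ({σ : Equiv.Perm (Fin n ⊕ Fin n) | ∀ v, σ v = v ∨ G.Adj v (σ v)}.ncard)
      = (Pfin G).card := by
    have h1 : {σ : Equiv.Perm (Fin n ⊕ Fin n) | ∀ v, σ v = v ∨ G.Adj v (σ v)}
        = ↑(Pfin G) := by
      ext σ; simp [Pfin]
    rw [h1, Set.ncard_coe_finset]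
  set E : ℚ := ∑ k ∈ range (n + 1), (1 : ℚ) / (Nat.factorial k) ^ 2 with hE
  have hE0 : 0 < E := by
    rw [hE]
    apply Finset.sum_pos
    · intro k _
      have : (0:ℚ) < (Nat.factorial k : ℚ) := by
        exact_mod_cast Nat.factorial_pos k
      positivity
    · exact ⟨0, by simp⟩
  have hP1 : 1 ≤ (Pfin G).card := by
    rw [Nat.succ_le_iff, Finset.card_pos]
    exact ⟨1, (mem_Pfin G).2 fun v => Or.inl rfl⟩
  have hP0 : (0:ℚ) < ((Pfin G).card : ℚ) := by exact_mod_cast hP1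
  have hPsum : ((Pfin G).card : ℚ) = ∑ k ∈ range (n + 1),
      ∑ S ∈ powersetCard k (univ : Finset (Fin n)),
        ∑ T ∈ powersetCard k (univ : Finset (Fin n)), ((Mch (Rel G) S T).card : ℚ) ^ 2 := by
    rw [Pfin_card hbip]
    push_cast
    exact Finset.sum_congr rfl fun k _ => Finset.sum_congr rfl fun S _ =>
      Finset.sum_congr rfl fun T _ => (sq ((Mch (Rel G) S T).card : ℚ)).symm
  have hterm : ∀ k ∈ range (n + 1), (a:ℚ)^2 / ((Nat.factorial (n - k) : ℚ))^2
      ≤ ∑ S ∈ powersetCard k (univ : Finset (Fin n)),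
          ∑ T ∈ powersetCard k (univ : Finset (Fin n)), ((Mch (Rel G) S T).card : ℚ) ^ 2 := by
    intro k hk
    have hfac : (0:ℚ) < ((Nat.factorial (n - k) : ℚ))^2 := by
      have : (0:ℚ) < (Nat.factorial (n-k) : ℚ) := by exact_mod_cast Nat.factorial_pos (n-k)
      positivity
    rw [div_le_iff₀ hfac]
    have hKT := key_term (G := G) (k := k) (Nat.lt_succ_iff.1 (Finset.mem_range.1 hk))
    calc (a:ℚ)^2 ≤ ((Nat.factorial (n - k) : ℚ))^2 *
          ∑ S ∈ powersetCard k (univ : Finset (Fin n)),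
            ∑ T ∈ powersetCard k (univ : Finset (Fin n)),
              ((Mch (Rel G) S T).card : ℚ) ^ 2 := hKT
      _ = _ := mul_comm _ _
  have hEsum : (a:ℚ)^2 * E = ∑ k ∈ range (n + 1),
      (a:ℚ)^2 / ((Nat.factorial (n - k) : ℚ))^2 := by
    rw [hE, Finset.mul_sum]
    simp_rw [mul_one_div]
    rw [← Finset.sum_range_reflect (fun j => (a:ℚ)^2 / ((Nat.factorial j : ℚ))^2) (n+1)]
    exact Finset.sum_congr rfl fun k hk => by
      have h1 : n + 1 - 1 - k = n - k := by omega
      rw [h1]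
  have hmain : (a:ℚ)^2 * E ≤ ((Pfin G).card : ℚ) := by
    rw [hEsum, hPsum]
    exact Finset.sum_le_sum hterm
  have hcast : ((a * a : ℕ) : ℚ) = (a:ℚ)^2 := by push_cast; ring
  rw [hDn, hPn, hcast]
  have hiff1 : (a:ℚ)^2 / ((Pfin G).card : ℚ) ≤ E⁻¹ ↔ (a:ℚ)^2 * E ≤ ((Pfin G).card : ℚ) := by
    rw [div_le_iff₀ hP0, inv_mul_eq_div, le_div_iff₀ hE0]
  have hiff2 : (a:ℚ)^2 / ((Pfin G).card : ℚ) = E⁻¹ ↔ (a:ℚ)^2 * E = ((Pfin G).card : ℚ) := by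
    rw [div_eq_iff hP0.ne', inv_mul_eq_div, eq_div_iff hE0.ne']
  refine ⟨hiff1.2 hmain, hiff2.trans ?_⟩
  constructor
  · -- equality implies complete bipartite
    intro hq
    have hsum_eq : (∑ k ∈ range (n + 1), (a:ℚ)^2 / ((Nat.factorial (n - k) : ℚ))^2)
        = ∑ k ∈ range (n + 1),
            ∑ S ∈ powersetCard k (univ : Finset (Fin n)),
              ∑ T ∈ powersetCard k (univ : Finset (Fin n)),
                ((Mch (Rel G) S T).card : ℚ) ^ 2 := by
      rw [← hEsum, ← hPsum, hq]
    have hall := (Finset.sum_eq_sum_iff_of_le hterm).1 hsum_eq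
    have h0 := hall 0 (Finset.mem_range.2 (Nat.succ_pos n))
    have hX0 : (∑ S ∈ powersetCard 0 (univ : Finset (Fin n)),
        ∑ T ∈ powersetCard 0 (univ : Finset (Fin n)),
          ((Mch (Rel G) S T).card : ℚ) ^ 2) = 1 := by
      rw [Finset.powersetCard_zero, Finset.sum_singleton, Finset.sum_singleton,
        Mch_empty, Finset.card_singleton]
      norm_num
    rw [hX0, Nat.sub_zero] at h0
    have hsq : (a:ℚ)^2 = ((Nat.factorial n : ℚ))^2 := by
      have hfac : ((Nat.factorial n : ℚ))^2 ≠ 0 := by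
        have : (0:ℚ) < (Nat.factorial n : ℚ) := by exact_mod_cast Nat.factorial_pos n
        positivity
      rw [div_eq_one_iff_eq hfac] at h0
      exact h0
    have hfq : (0:ℚ) ≤ (Nat.factorial n : ℚ) := by positivity
    have haq : (0:ℚ) ≤ (a : ℚ) := by positivity
    have hle1 : (a:ℚ) ≤ (Nat.factorial n : ℚ) := by nlinarith
    have hle2 : ((Nat.factorial n : ℚ)) ≤ (a:ℚ) := by nlinarith
    have haval : a = Nat.factorial n := by
      have : (a:ℚ) = (Nat.factorial n : ℚ) := le_antisymm hle1 hle2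
      exact_mod_cast this
    exact fun i j => rel_adj.1 (total_of_card haval i j)
  · -- complete bipartite implies equality
    intro hcomp
    have htot : ∀ i j : Fin n, Rel G i j := fun i j => rel_adj.2 (hcomp i j)
    have haval : a = Nat.factorial n := by
      rw [ha, Mch_card_of_total htot rfl, Finset.card_univ, Fintype.card_fin]
    rw [hPsum, hEsum]
    apply Finset.sum_congr rfl
    intro k hk
    have hk' : k ≤ n := Nat.lt_succ_iff.1 (Finset.mem_range.1 hk)
    have hinner : (∑ S ∈ powersetCard k (univ : Finset (Fin n)),
        ∑ T ∈ powersetCard k (univ : Finset (Fin n)),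
          ((Mch (Rel G) S T).card : ℚ) ^ 2)
        = (n.choose k : ℚ)^2 * ((Nat.factorial k : ℚ))^2 := by
      have hval : ∀ S ∈ powersetCard k (univ : Finset (Fin n)),
          ∀ T ∈ powersetCard k (univ : Finset (Fin n)),
            ((Mch (Rel G) S T).card : ℚ) ^ 2 = ((Nat.factorial k : ℚ))^2 := by
        intro S hS T hT
        have hSk : S.card = k := Finset.mem_powersetCard_univ.1 hS
        have hTk : T.card = k := Finset.mem_powersetCard_univ.1 hT
        rw [Mch_card_of_total htot (by rw [hSk, hTk]), hSk]
      rw [Finset.sum_congr rfl (fun S hS => Finset.sum_congr rfl (hval S hS)),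
        Finset.sum_const, Finset.sum_const, Finset.card_powersetCard, Finset.card_univ,
        Fintype.card_fin, nsmul_eq_mul, nsmul_eq_mul]
      ring
    rw [hinner, haval]
    have hfact : ((n.choose k : ℚ)) * (Nat.factorial k : ℚ) * (Nat.factorial (n - k) : ℚ)
        = (Nat.factorial n : ℚ) := by
      exact_mod_cast congrArg (Nat.cast : ℕ → ℚ) (Nat.choose_mul_factorial_mul_factorial hk')
    have hne : ((Nat.factorial (n - k) : ℚ)) ≠ 0 := by
      have : (0:ℚ) < (Nat.factorial (n - k) : ℚ) := by exact_mod_cast Nat.factorial_pos _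
      exact this.ne'
    rw [div_eq_iff (pow_ne_zero 2 hne), ← hfact]
    ring
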